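/- Let F=(V,E∪A) be a mixed graph and S a multiset of V. There exists a packing of spanning mixed s-arborescences in F, one rooted at each element s of S (counted with multiplicity), if and only if e_{E∪A}(𝒫) ≥ |S|·|𝒫| − |S_{∪𝒫}| for every subpartition 𝒫 of V. (Frank's theorem on mixed graphs) -/

import Mathlib

/- Common definitions for formalizing packing-of-arborescences theorems.

Conventions:
* A digraph on a finite vertex type `V` is given by a finite multiset of arcs
  `A : Multiset (V × V)`, an arc `(u, v)` having tail `u` and head `v`.
* An undirected (multi)graph is given by a multiset of edges `E : Multiset (V × V)`,
  an edge being recorded as an (arbitrarily ordered) pair of its endpoints.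
* A multiset `S` of vertices (e.g. of roots) is given by a finite index type `S`
  together with a placement map `π : S → V`; the multiplicity of a vertex `v` is
  the size of the fiber over `v`.
* A dypergraph is given by a multiset `𝒜 : Multiset (Finset V × V)` of dyperedges
  `(Z, z)` with tail set `Z` and head `z`; a hypergraph by a multiset
  `ℰ : Multiset (Finset V)` of hyperedges. -/

attribute [local instance] Classical.propDecidable

noncomputable section

namespace ArborPaper

variable {V : Type*} [Fintype V] [DecidableEq V]

/-- An arc `a = (u, v)` (tail `u`, head `v`) enters `X` if its head is in `X`
and its tail is outside. -/
def arcEnters (a : V × V) (X : Finset V) : Prop := a.2 ∈ X ∧ a.1 ∉ X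

/-- An undirected edge (given by a pair of endpoints) enters `X` if exactly one of
its endpoints is in `X`. -/
def edgeEnters (e : V × V) (X : Finset V) : Prop :=
  (e.1 ∈ X ∧ e.2 ∉ X) ∨ (e.2 ∈ X ∧ e.1 ∉ X)

/-- The in-degree `d⁻_A(X)` of a vertex set `X`. -/
def inDeg (A : Multiset (V × V)) (X : Finset V) : ℕ :=
  (A.filter fun a => arcEnters a X).card

/-- The in-degree of a single vertex. -/
def inDegV (A : Multiset (V × V)) (v : V) : ℕ :=
  (A.filter fun a => a.2 = v).card

/-- Reachability by a directed path using the arcs of `A`. -/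
def Reaches (A : Multiset (V × V)) (u v : V) : Prop :=
  Relation.ReflTransGen (fun x y => (x, y) ∈ A) u v

/-- `P_D^X` : the set of vertices from which some vertex of `X` is reachable. -/
def PD (A : Multiset (V × V)) (X : Finset V) : Finset V :=
  Finset.univ.filter fun u => ∃ v ∈ X, Reaches A u v

/-- `Q_D^X` : the set of vertices reachable from some vertex of `X`. -/
def QD (A : Multiset (V × V)) (X : Finset V) : Finset V :=
  Finset.univ.filter fun v => ∃ u ∈ X, Reaches A u v

/-- `C` is a strongly connected component of the digraph `(V, A)`. -/
def IsSCCD (A : Multiset (V × V)) (C : Finset V) : Prop :=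
  ∃ v : V, C = Finset.univ.filter fun u => Reaches A u v ∧ Reaches A v u

/-- `B` is an `s`-arborescence with vertex set `U` : all arcs lie inside `U`,
every vertex of `U` other than `s` has in-degree exactly `1`, the root has
in-degree `0`, and every vertex of `U` is reachable from `s`
(equivalently: no circuit and all in-degrees of non-root vertices equal `1`). -/
def IsArborOn (B : Multiset (V × V)) (U : Finset V) (s : V) : Prop :=
  s ∈ U ∧ (∀ a ∈ B, a.1 ∈ U ∧ a.2 ∈ U) ∧
  (∀ v ∈ U, v ≠ s → inDegV B v = 1) ∧ inDegV B s = 0 ∧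
  ∀ v ∈ U, Reaches B s v

/-- `B` is a spanning `s`-arborescence (vertex set all of `V`). -/
def IsSpanningArbor (B : Multiset (V × V)) (s : V) : Prop :=
  IsArborOn B Finset.univ s

/-- One step along a mixed graph: an arc of `A`, or an edge of `E` in either direction. -/
def MStep (E A : Multiset (V × V)) (u v : V) : Prop :=
  (u, v) ∈ A ∨ (u, v) ∈ E ∨ (v, u) ∈ E

/-- Reachability by a mixed path in the mixed graph `(V, E ∪ A)`. -/
def MReaches (E A : Multiset (V × V)) (u v : V) : Prop :=
  Relation.ReflTransGen (MStep E A) u v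

/-- `P_F^X` for a mixed graph `F = (V, E ∪ A)`. -/
def PF (E A : Multiset (V × V)) (X : Finset V) : Finset V :=
  Finset.univ.filter fun u => ∃ v ∈ X, MReaches E A u v

/-- `Q_F^X` for a mixed graph `F = (V, E ∪ A)`. -/
def QF (E A : Multiset (V × V)) (X : Finset V) : Finset V :=
  Finset.univ.filter fun v => ∃ u ∈ X, MReaches E A u v

/-- `C` is a strongly connected component of the mixed graph `(V, E ∪ A)`. -/
def IsSCC (E A : Multiset (V × V)) (C : Finset V) : Prop :=
  ∃ v : V, C = Finset.univ.filter fun u => MReaches E A u v ∧ MReaches E A v u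

/-- `e_{E∪A}(𝒫)` : the number of edges of `E` and arcs of `A` entering at least one
member of the family `P`. -/
def eMixed (E A : Multiset (V × V)) (P : Finset (Finset V)) : ℕ :=
  (E.filter fun e => ∃ X ∈ P, edgeEnters e X).card +
  (A.filter fun a => ∃ X ∈ P, arcEnters a X).card

/-- A subpartition of `V` : a set of pairwise disjoint nonempty subsets. -/
def IsSubpartition (P : Finset (Finset V)) : Prop :=
  (∀ X ∈ P, X.Nonempty) ∧ ∀ X ∈ P, ∀ Y ∈ P, X ≠ Y → Disjoint X Y

/-- `Eo` is an orientation of the multiset `E` of undirected edges: each edge is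
kept or swapped. -/
def IsOrientationOf (E Eo : Multiset (V × V)) : Prop :=
  Multiset.Rel (fun e a => a = e ∨ a = Prod.swap e) E Eo

/-- The rank function of a matroid on a finite ground type `S`. -/
structure RankFn (S : Type*) [Fintype S] [DecidableEq S] where
  r : Finset S → ℕ
  rank_le_card : ∀ X : Finset S, r X ≤ X.card
  mono : ∀ ⦃X Y : Finset S⦄, X ⊆ Y → r X ≤ r Y
  submodular : ∀ X Y : Finset S, r (X ∪ Y) + r (X ∩ Y) ≤ r X + r Y

/-- `B` is a basis of `T` in the matroid with rank function `M` : an independent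
subset of `T` of full rank in `T`. -/
def RankFn.IsBasisOf {S : Type*} [Fintype S] [DecidableEq S] (M : RankFn S)
    (B T : Finset S) : Prop :=
  B ⊆ T ∧ M.r B = B.card ∧ M.r B = M.r T

/-- A dyperedge `a = (Z, z)` enters `X` if its head `z` is in `X` and some tail
vertex lies outside `X`. -/
def dypEnters (a : Finset V × V) (X : Finset V) : Prop :=
  a.2 ∈ X ∧ (a.1 \ X).Nonempty

/-- The in-degree `d⁻_𝒜(X)` in a dypergraph. -/
def dypInDeg (𝒜 : Multiset (Finset V × V)) (X : Finset V) : ℕ :=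
  (𝒜.filter fun a => dypEnters a X).card

/-- A hyperedge `e` enters `X` if it meets both `X` and its complement. -/
def hypEnters (e X : Finset V) : Prop := (e ∩ X).Nonempty ∧ (e \ X).Nonempty

/-- `e_{ℰ∪𝒜}(𝒫)` for a mixed hypergraph: the number of hyperedges of `ℰ` and
dyperedges of `𝒜` entering at least one member of `P`. -/
def eMH (ℰ : Multiset (Finset V)) (𝒜 : Multiset (Finset V × V))
    (P : Finset (Finset V)) : ℕ :=
  (ℰ.filter fun e => ∃ X ∈ P, hypEnters e X).card +
  (𝒜.filter fun a => ∃ X ∈ P, dypEnters a X).card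

/-- `B` is obtained from the multiset `𝒵` of dyperedges by trimming each
dyperedge `(Z, z)` to an arc `(y, z)` with `y ∈ Z`. -/
def Trims (𝒵 : Multiset (Finset V × V)) (B : Multiset (V × V)) : Prop :=
  Multiset.Rel (fun a b => b.2 = a.2 ∧ b.1 ∈ a.1) 𝒵 B

/-- `𝒟` is an orientation of the multiset `ℰ` of hyperedges: each hyperedge `X`
is replaced by a dyperedge `(X − x, x)` for some `x ∈ X`. -/
def Orients (ℰ : Multiset (Finset V)) (𝒟 : Multiset (Finset V × V)) : Prop :=
  Multiset.Rel (fun e a => a.2 ∈ e ∧ a.1 = e.erase a.2) ℰ 𝒟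
set_option linter.unusedSectionVars false

/-! ### Infrastructure: counting lemmas -/

section Infra

/-- canonical indicator (classical decidability) -/
noncomputable def ind (p : Prop) : ℕ := if p then 1 else 0

lemma ind_pos {p : Prop} (h : p) : ind p = 1 := by simp [ind, h]

lemma ind_neg {p : Prop} (h : ¬ p) : ind p = 0 := by simp [ind, h]

lemma ind_le_one (p : Prop) : ind p ≤ 1 := by unfold ind; split_ifs <;> omega

/-- canonical count of elements satisfying `p` (classical decidability) -/
def cnt {α : Type*} (p : α → Prop) (M : Multiset α) : ℕ :=
  (M.filter p).card

lemma cnt_eq_card_filter {α : Type*} (p : α → Prop) [inst : DecidablePred p] (M : Multiset α) :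
    (M.filter p).card = cnt p M := by
  unfold cnt
  exact congrArg Multiset.card
    (@Multiset.filter_congr _ p p inst (fun a => Classical.propDecidable (p a)) M (fun x _ => Iff.rfl))

lemma countP_eq_cnt {α : Type*} (p : α → Prop) [DecidablePred p] (M : Multiset α) :
    M.countP p = cnt p M := by
  rw [Multiset.countP_eq_card_filter, cnt_eq_card_filter]

lemma cnt_zero {α : Type*} (p : α → Prop) : cnt p (0 : Multiset α) = 0 := by
  simp [cnt]

lemma cnt_cons {α : Type*} (p : α → Prop) (a : α) (M : Multiset α) :
    cnt p (a ::ₘ M) = cnt p M + ind (p a) := by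
  rw [cnt, cnt, ← Multiset.countP_eq_card_filter, ← Multiset.countP_eq_card_filter,
    Multiset.countP_cons, ind]

lemma cnt_add {α : Type*} (p : α → Prop) (M N : Multiset α) :
    cnt p (M + N) = cnt p M + cnt p N := by
  rw [cnt, cnt, cnt, ← Multiset.countP_eq_card_filter, ← Multiset.countP_eq_card_filter,
    ← Multiset.countP_eq_card_filter, Multiset.countP_add]

lemma cnt_le_card {α : Type*} (p : α → Prop) (M : Multiset α) :
    cnt p M ≤ Multiset.card M := by
  rw [cnt, ← Multiset.countP_eq_card_filter]
  exact Multiset.countP_le_card _ _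

lemma cnt_le_of_le {α : Type*} (p : α → Prop) {M N : Multiset α} (h : M ≤ N) :
    cnt p M ≤ cnt p N := by
  rw [cnt, cnt, ← Multiset.countP_eq_card_filter, ← Multiset.countP_eq_card_filter]
  exact Multiset.countP_le_of_le _ h

lemma cnt_sub {α : Type*} [DecidableEq α] (p : α → Prop) {M N : Multiset α} (h : N ≤ M) :
    cnt p (M - N) = cnt p M - cnt p N := by
  classical
  simp only [cnt, Multiset.filter_sub]
  rw [Multiset.card_sub (Multiset.filter_le_filter _ h)]

lemma cnt_pair_le {α : Type*} (M : Multiset α) (p₁ p₂ q₁ q₂ : α → Prop)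
    (h : ∀ a ∈ M, ind (p₁ a) + ind (p₂ a) ≤ ind (q₁ a) + ind (q₂ a)) :
    cnt p₁ M + cnt p₂ M ≤ cnt q₁ M + cnt q₂ M := by
  induction M using Multiset.induction with
  | empty => simp [cnt_zero]
  | cons a s ih =>
    have h1 := h a (Multiset.mem_cons_self a s)
    have h2 := ih (fun b hb => h b (Multiset.mem_cons_of_mem hb))
    simp only [cnt_cons]
    omega

lemma cnt_mono_pt {α : Type*} (M : Multiset α) (p q : α → Prop)
    (h : ∀ a ∈ M, p a → q a) : cnt p M ≤ cnt q M := by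
  induction M using Multiset.induction with
  | empty => simp [cnt_zero]
  | cons a s ih =>
    have h1 := h a (Multiset.mem_cons_self a s)
    have h2 := ih (fun b hb => h b (Multiset.mem_cons_of_mem hb))
    simp only [cnt_cons]
    by_cases hp : p a
    · simp [ind, hp, h1 hp]; omega
    · simp [ind, hp]; omega

lemma cnt_le_add_pt {α : Type*} (M : Multiset α) (p q r : α → Prop)
    (h : ∀ a ∈ M, p a → q a ∨ r a) : cnt p M ≤ cnt q M + cnt r M := by
  induction M using Multiset.induction with
  | empty => simp [cnt_zero]
  | cons a s ih =>
    have h1 := h a (Multiset.mem_cons_self a s)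
    have h2 := ih (fun b hb => h b (Multiset.mem_cons_of_mem hb))
    simp only [cnt_cons]
    by_cases hp : p a
    · rcases h1 hp with h' | h' <;> simp [ind, hp, h'] <;> omega
    · simp [ind, hp]; omega

lemma inDeg_eq_cnt (A : Multiset (V × V)) (X : Finset V) :
    inDeg A X = cnt (fun a => arcEnters a X) A := by
  rw [inDeg, cnt_eq_card_filter]

lemma inDeg_add (A B : Multiset (V × V)) (X : Finset V) :
    inDeg (A + B) X = inDeg A X + inDeg B X := by
  simp [inDeg_eq_cnt, cnt_add]

lemma inDeg_cons (a : V × V) (A : Multiset (V × V)) (X : Finset V) :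
    inDeg (a ::ₘ A) X = inDeg A X + ind (arcEnters a X) := by
  simp [inDeg_eq_cnt, cnt_cons]

lemma inDeg_le_of_le {A B : Multiset (V × V)} (h : A ≤ B) (X : Finset V) :
    inDeg A X ≤ inDeg B X := by
  simp only [inDeg_eq_cnt]
  exact cnt_le_of_le _ h

lemma inDeg_sub {T A : Multiset (V × V)} (h : T ≤ A) (X : Finset V) :
    inDeg (A - T) X = inDeg A X - inDeg T X := by
  simp only [inDeg_eq_cnt]
  exact cnt_sub _ h

lemma inDeg_submod (A : Multiset (V × V)) (X Y : Finset V) :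
    inDeg A (X ∪ Y) + inDeg A (X ∩ Y) ≤ inDeg A X + inDeg A Y := by
  simp only [inDeg_eq_cnt]
  refine cnt_pair_le _ _ _ _ _ (fun a _ => ?_)
  by_cases h1 : a.2 ∈ X <;> by_cases h2 : a.2 ∈ Y <;> by_cases h3 : a.1 ∈ X <;>
    by_cases h4 : a.1 ∈ Y <;>
    simp [ind, arcEnters, Finset.mem_union, Finset.mem_inter, h1, h2, h3, h4]

end Infra
section IndMore

lemma ind_mono {p q : Prop} (h : p → q) : ind p ≤ ind q := by
  unfold ind
  split_ifs with h1 h2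
  · omega
  · exact absurd (h h1) h2
  · omega
  · omega

lemma ind_congr {p q : Prop} (h : p ↔ q) : ind p = ind q :=
  le_antisymm (ind_mono h.mp) (ind_mono h.mpr)

lemma of_ind_eq_one {p : Prop} (h : ind p = 1) : p := by
  by_contra hp
  rw [ind_neg hp] at h
  omega

lemma cnt_eq_zero_of {α : Type*} {p : α → Prop} {M : Multiset α}
    (h : ∀ a ∈ M, ¬ p a) : cnt p M = 0 := by
  induction M using Multiset.induction with
  | empty => simp [cnt_zero]
  | cons a s ih =>
    rw [cnt_cons, ih (fun b hb => h b (Multiset.mem_cons_of_mem hb)),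
      ind_neg (h a (Multiset.mem_cons_self a s))]

lemma cnt_pos_of {α : Type*} {p : α → Prop} {M : Multiset α}
    (h : 1 ≤ cnt p M) : ∃ a ∈ M, p a := by
  by_contra hh
  push_neg at hh
  rw [cnt_eq_zero_of hh] at h
  omega

lemma inDegV_eq_cnt (A : Multiset (V × V)) (v : V) :
    inDegV A v = cnt (fun a => a.2 = v) A := by
  rw [inDegV, cnt_eq_card_filter]

lemma inDegV_cons (a : V × V) (A : Multiset (V × V)) (v : V) :
    inDegV (a ::ₘ A) v = inDegV A v + ind (a.2 = v) := by
  simp [inDegV_eq_cnt, cnt_cons]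

lemma inDegV_zero (v : V) : inDegV (0 : Multiset (V × V)) v = 0 := by
  simp [inDegV]

lemma cons_le_of_mem_sub {a : V × V} {T D : Multiset (V × V)}
    (hTD : T ≤ D) (ha : a ∈ D - T) : a ::ₘ T ≤ D := by
  rw [Multiset.le_iff_count]
  intro x
  rw [Multiset.count_cons]
  have h1 := Multiset.le_iff_count.mp hTD x
  by_cases hx : x = a
  · subst hx
    have h2 : 0 < Multiset.count x (D - T) := Multiset.count_pos.mpr ha
    rw [Multiset.count_sub] at h2
    rw [if_pos rfl]
    omega
  · simp [hx]
    omega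

end IndMore
/-! ### Weight counts, eMixed lemmas, reachability -/

section WCount

variable {ι : Type*} [Fintype ι]

/-- number of indices placed inside `X` -/
def wcount (ρ : ι → V) (X : Finset V) : ℕ :=
  (Finset.univ.filter fun i => ρ i ∈ X).card

lemma wcount_eq_sum (ρ : ι → V) (X : Finset V) :
    wcount ρ X = ∑ i : ι, (if ρ i ∈ X then 1 else 0) := by
  rw [wcount, Finset.card_filter]

lemma wcount_le_card (ρ : ι → V) (X : Finset V) : wcount ρ X ≤ Fintype.card ι := by
  classical
  exact (Finset.card_filter_le _ _).trans (le_of_eq (Finset.card_univ))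

lemma wcount_mono (ρ : ι → V) {X Y : Finset V} (h : X ⊆ Y) : wcount ρ X ≤ wcount ρ Y := by
  rw [wcount_eq_sum, wcount_eq_sum]
  refine Finset.sum_le_sum fun i _ => ?_
  by_cases hx : ρ i ∈ X
  · simp [hx, h hx]
  · simp [hx]

lemma wcount_modular (ρ : ι → V) (X Y : Finset V) :
    wcount ρ (X ∪ Y) + wcount ρ (X ∩ Y) = wcount ρ X + wcount ρ Y := by
  simp only [wcount_eq_sum, ← Finset.sum_add_distrib]
  refine Finset.sum_congr rfl fun i _ => ?_
  by_cases h1 : ρ i ∈ X <;> by_cases h2 : ρ i ∈ Y <;>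
    simp [Finset.mem_union, Finset.mem_inter, h1, h2]

end WCount

section EMixedLemmas

lemma eMixed_eq_cnt (E A : Multiset (V × V)) (P : Finset (Finset V)) :
    eMixed E A P = cnt (fun e => ∃ X ∈ P, edgeEnters e X) E +
      cnt (fun a => ∃ X ∈ P, arcEnters a X) A := by
  rw [eMixed, cnt_eq_card_filter, cnt_eq_card_filter]

lemma eMixed_cons_edge (e : V × V) (E A : Multiset (V × V)) (P : Finset (Finset V)) :
    eMixed (e ::ₘ E) A P = eMixed E A P + ind (∃ X ∈ P, edgeEnters e X) := by
  simp only [eMixed_eq_cnt, cnt_cons]; omega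

lemma eMixed_cons_arc (a : V × V) (E A : Multiset (V × V)) (P : Finset (Finset V)) :
    eMixed E (a ::ₘ A) P = eMixed E A P + ind (∃ X ∈ P, arcEnters a X) := by
  simp only [eMixed_eq_cnt, cnt_cons]; omega

end EMixedLemmas

section ReachLemmas

lemma Reaches_mono {A B : Multiset (V × V)} (h : A ≤ B) {u v : V} (hr : Reaches A u v) :
    Reaches B u v :=
  Relation.ReflTransGen.mono (fun _ _ hxy => Multiset.mem_of_le h hxy) _ _ hr

lemma reaches_enter {B : Multiset (V × V)} {u v : V} {X : Finset V}
    (h : Reaches B u v) (hu : u ∉ X) (hv : v ∈ X) : ∃ a ∈ B, arcEnters a X := by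
  induction h with
  | refl => exact absurd hv hu
  | @tail b c hub hbc ih =>
    by_cases hb : b ∈ X
    · exact ih hb
    · exact ⟨(b, c), hbc, hv, hb⟩

end ReachLemmas
/-! ### The merge (uncrossing) lemma for subpartitions -/

section Merge

/-- number of intersecting pairs between two families -/
def npairs (P₁ P₂ : Finset (Finset V)) : ℕ :=
  ∑ X ∈ P₁, ∑ Y ∈ P₂, if (X ∩ Y).Nonempty then 1 else 0

lemma merge_exists (P₁ : Finset (Finset V)) (hP₁ : IsSubpartition P₁)
    (P₂ : Finset (Finset V)) (hP₂ : IsSubpartition P₂) :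
    ∃ Q : Finset (Finset V), IsSubpartition Q ∧
      Q.biUnion id = P₁.biUnion id ∪ P₂.biUnion id ∧
      (∀ W : Finset V, (W ∈ P₁ ∨ W ∈ P₂) → ∃ M ∈ Q, W ⊆ M) ∧
      P₁.card + P₂.card ≤ Q.card + npairs P₁ P₂ := by
  induction P₂ using Finset.induction_on with
  | empty =>
    refine ⟨P₁, hP₁, by simp, fun W hW => ?_, by simp⟩
    rcases hW with hW | hW
    · exact ⟨W, hW, subset_rfl⟩
    · simp at hW
  | @insert Y₀ P₂' hY₀P₂' ih =>
    have hP₂'sub : IsSubpartition P₂' := by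
      refine ⟨fun Y hY => hP₂.1 Y (Finset.mem_insert_of_mem hY), fun X hX Y hY hXY =>
        hP₂.2 X (Finset.mem_insert_of_mem hX) Y (Finset.mem_insert_of_mem hY) hXY⟩
    have hY₀ne : Y₀.Nonempty := hP₂.1 Y₀ (Finset.mem_insert_self _ _)
    have hdisj2 : ∀ Y ∈ P₂', Disjoint Y₀ Y := by
      intro Y hY
      exact hP₂.2 Y₀ (Finset.mem_insert_self _ _) Y (Finset.mem_insert_of_mem hY)
        (fun h => hY₀P₂' (h ▸ hY))
    obtain ⟨Q', hQ'sub, hQ'bi, hQ'cov, hQ'card⟩ := ih hP₂'sub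
    set 𝒦 : Finset (Finset V) := Q'.filter (fun M => (M ∩ Y₀).Nonempty) with h𝒦
    set Mstar : Finset V := Y₀ ∪ 𝒦.sup id with hMstar
    set Q : Finset (Finset V) := insert Mstar (Q' \ 𝒦) with hQdef
    have h𝒦sub : 𝒦 ⊆ Q' := Finset.filter_subset _ _
    have hY₀Mstar : Y₀ ⊆ Mstar := Finset.subset_union_left
    have hdisjN : ∀ N ∈ Q' \ 𝒦, Disjoint N Mstar := by
      intro N hN
      rw [Finset.mem_sdiff] at hN
      have h1 : Disjoint N Y₀ := by
        rcases Finset.eq_empty_or_nonempty (N ∩ Y₀) with h | h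
        · exact Finset.disjoint_iff_inter_eq_empty.mpr h
        · refine absurd ?_ hN.2
          rw [h𝒦]
          exact Finset.mem_filter.mpr ⟨hN.1, h⟩
      have h2 : Disjoint N (𝒦.sup id) := by
        rw [Finset.disjoint_sup_right]
        intro M hM
        refine hQ'sub.2 N hN.1 M (h𝒦sub hM) (fun hEq => ?_)
        exact hN.2 (hEq ▸ hM)
      rw [hMstar, Finset.disjoint_union_right]
      exact ⟨h1, h2⟩
    have hMstarQ' : Mstar ∉ Q' \ 𝒦 := by
      intro hmem
      have := hdisjN Mstar hmem
      obtain ⟨y, hy⟩ := hY₀ne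
      exact Finset.disjoint_left.mp this (hY₀Mstar hy) (hY₀Mstar hy)
    have hQsub : IsSubpartition Q := by
      constructor
      · intro X hX
        rw [hQdef, Finset.mem_insert] at hX
        rcases hX with rfl | hX
        · exact hY₀ne.mono hY₀Mstar
        · exact hQ'sub.1 X (Finset.mem_sdiff.mp hX).1
      · intro X hX Y hY hXY
        rw [hQdef, Finset.mem_insert] at hX hY
        rcases hX with rfl | hX <;> rcases hY with rfl | hY
        · exact absurd rfl hXY
        · exact (hdisjN Y hY).symm
        · exact hdisjN X hX
        · exact hQ'sub.2 X ((Finset.mem_sdiff.mp hX).1) Y ((Finset.mem_sdiff.mp hY).1) hXY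
    refine ⟨Q, hQsub, ?_, ?_, ?_⟩
    · ext x
      have hbi := Finset.ext_iff.mp hQ'bi x
      simp only [Finset.mem_biUnion, Finset.mem_union, id] at hbi
      simp only [hQdef, Finset.mem_biUnion, Finset.mem_insert, Finset.mem_union, id]
      constructor
      · rintro ⟨M, hM | hM, hxM⟩
        · rw [hM] at hxM
          rw [hMstar, Finset.mem_union, Finset.mem_sup] at hxM
          rcases hxM with hx | ⟨v, hv, hxv⟩
          · right; exact ⟨Y₀, Or.inl rfl, hx⟩
          · rcases hbi.mp ⟨v, h𝒦sub hv, hxv⟩ with h | ⟨Y, hY, hxY⟩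
            · left; exact h
            · right; exact ⟨Y, Or.inr hY, hxY⟩
        · rcases hbi.mp ⟨M, (Finset.mem_sdiff.mp hM).1, hxM⟩ with h | ⟨Y, hY, hxY⟩
          · left; exact h
          · right; exact ⟨Y, Or.inr hY, hxY⟩
      · intro hx
        have hx' : (∃ M ∈ Q', x ∈ M) ∨ x ∈ Y₀ := by
          rcases hx with h | ⟨Y, hY, hxY⟩
          · left; exact hbi.mpr (Or.inl h)
          · rcases hY with rfl | hY
            · right; exact hxY
            · left; exact hbi.mpr (Or.inr ⟨Y, hY, hxY⟩)
        rcases hx' with ⟨M, hM, hxM⟩ | hx'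
        · by_cases hM𝒦 : M ∈ 𝒦
          · refine ⟨Mstar, Or.inl rfl, ?_⟩
            rw [hMstar, Finset.mem_union, Finset.mem_sup]
            exact Or.inr ⟨M, hM𝒦, hxM⟩
          · exact ⟨M, Or.inr (Finset.mem_sdiff.mpr ⟨hM, hM𝒦⟩), hxM⟩
        · exact ⟨Mstar, Or.inl rfl, hY₀Mstar hx'⟩
    · intro W hW
      have hW' : W = Y₀ ∨ (W ∈ P₁ ∨ W ∈ P₂') := by
        rcases hW with h | h
        · right; left; exact h
        · rw [Finset.mem_insert] at h; tauto
      rcases hW' with rfl | hW'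
      · exact ⟨Mstar, Finset.mem_insert_self _ _, hY₀Mstar⟩
      · obtain ⟨M, hM, hWM⟩ := hQ'cov W hW'
        by_cases hM𝒦 : M ∈ 𝒦
        · refine ⟨Mstar, Finset.mem_insert_self _ _, hWM.trans ?_⟩
          intro x hx
          rw [hMstar, Finset.mem_union, Finset.mem_sup]
          exact Or.inr ⟨M, hM𝒦, hx⟩
        · exact ⟨M, Finset.mem_insert_of_mem (Finset.mem_sdiff.mpr ⟨hM, hM𝒦⟩), hWM⟩
    · have hcardQ : Q.card = Q'.card - 𝒦.card + 1 := by
        rw [hQdef, Finset.card_insert_of_notMem hMstarQ', Finset.card_sdiff_of_subset h𝒦sub]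
      have hchoice : ∀ M : Finset V, ∃ X : Finset V, M ∈ 𝒦 →
          X ∈ P₁ ∧ X ⊆ M ∧ (X ∩ Y₀).Nonempty := by
        intro M
        by_cases hM : M ∈ 𝒦
        · obtain ⟨y, hy⟩ := (Finset.mem_filter.mp hM).2
          rw [Finset.mem_inter] at hy
          have hyQ' : y ∈ Q'.biUnion id :=
            Finset.mem_biUnion.mpr ⟨M, h𝒦sub hM, hy.1⟩
          rw [hQ'bi, Finset.mem_union] at hyQ'
          have hy1 : ∃ X ∈ P₁, y ∈ X := by
            rcases hyQ' with h | h
            · exact Finset.mem_biUnion.mp h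
            · obtain ⟨Y, hY, hyY⟩ := Finset.mem_biUnion.mp h
              exact absurd hy.2 (Finset.disjoint_right.mp (hdisj2 Y hY) hyY)
          obtain ⟨X, hX, hyX⟩ := hy1
          obtain ⟨M', hM', hXM'⟩ := hQ'cov X (Or.inl hX)
          have hMM' : M' = M := by
            by_contra hne
            exact Finset.disjoint_left.mp
              (hQ'sub.2 M' hM' M (h𝒦sub hM) hne) (hXM' hyX) hy.1
          exact ⟨X, fun _ => ⟨hX, hMM' ▸ hXM', ⟨y, Finset.mem_inter.mpr ⟨hyX, hy.2⟩⟩⟩⟩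
        · exact ⟨∅, fun h => absurd h hM⟩
      choose F hF using hchoice
      have hKcard : 𝒦.card ≤ (P₁.filter fun X => (X ∩ Y₀).Nonempty).card := by
        refine Finset.card_le_card_of_injOn F (fun M hM => ?_) ?_
        · obtain ⟨h1, _, h3⟩ := hF M hM
          exact Finset.mem_filter.mpr ⟨h1, h3⟩
        · intro M hM M' hM' hFF
          simp only [Finset.mem_coe] at hM hM'
          by_contra hne
          obtain ⟨_, h2, h3⟩ := hF M hM
          obtain ⟨_, h2', _⟩ := hF M' hM'
          obtain ⟨y, hy⟩ := h3
          have hyX : y ∈ F M := (Finset.mem_inter.mp hy).1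
          exact Finset.disjoint_left.mp
            (hQ'sub.2 M (h𝒦sub hM) M' (h𝒦sub hM') hne)
            (h2 hyX) (h2' (hFF ▸ hyX))
      have hfilter : (P₁.filter fun X => (X ∩ Y₀).Nonempty).card
          = ∑ X ∈ P₁, if (X ∩ Y₀).Nonempty then 1 else 0 := Finset.card_filter _ _
      have hnp : npairs P₁ (insert Y₀ P₂') = npairs P₁ P₂'
          + (P₁.filter fun X => (X ∩ Y₀).Nonempty).card := by
        rw [hfilter, npairs, npairs, ← Finset.sum_add_distrib]
        refine Finset.sum_congr rfl fun X _ => ?_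
        rw [Finset.sum_insert hY₀P₂']
        omega
      have hKQ' : 𝒦.card ≤ Q'.card := Finset.card_le_card h𝒦sub
      have hPc : (insert Y₀ P₂').card = P₂'.card + 1 := Finset.card_insert_of_notMem hY₀P₂'
      omega

end Merge
/-! ### The intersection family and pointwise entering bounds -/

section PW

/-- the family of pairwise intersections -/
def interFam (P₁ P₂ : Finset (Finset V)) : Finset (Finset V) :=
  ((P₁ ×ˢ P₂).filter fun p => (p.1 ∩ p.2).Nonempty).image fun p => p.1 ∩ p.2

lemma subpart_eq_of_mem {P : Finset (Finset V)} (hP : IsSubpartition P)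
    {Z Z' : Finset V} (hZ : Z ∈ P) (hZ' : Z' ∈ P) {x : V}
    (h1 : x ∈ Z) (h2 : x ∈ Z') : Z = Z' := by
  by_contra hne
  exact Finset.disjoint_left.mp (hP.2 Z hZ Z' hZ' hne) h1 h2

lemma mem_interFam {P₁ P₂ : Finset (Finset V)} {Z : Finset V} :
    Z ∈ interFam P₁ P₂ ↔ ∃ X ∈ P₁, ∃ Y ∈ P₂, (X ∩ Y).Nonempty ∧ Z = X ∩ Y := by
  constructor
  · intro h
    obtain ⟨⟨X, Y⟩, hmem, rfl⟩ := Finset.mem_image.mp h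
    have h' := Finset.mem_filter.mp hmem
    have h'' := Finset.mem_product.mp h'.1
    exact ⟨X, h''.1, Y, h''.2, h'.2, rfl⟩
  · rintro ⟨X, hX, Y, hY, hne, rfl⟩
    exact Finset.mem_image.mpr ⟨(X, Y), Finset.mem_filter.mpr
      ⟨Finset.mem_product.mpr ⟨hX, hY⟩, hne⟩, rfl⟩

lemma interFam_subpart {P₁ P₂ : Finset (Finset V)} (h₁ : IsSubpartition P₁)
    (h₂ : IsSubpartition P₂) : IsSubpartition (interFam P₁ P₂) := by
  constructor
  · intro Z hZ
    obtain ⟨X, _, Y, _, hne, rfl⟩ := mem_interFam.mp hZ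
    exact hne
  · intro Z hZ Z' hZ' hne
    obtain ⟨X, hX, Y, hY, hne1, rfl⟩ := mem_interFam.mp hZ
    obtain ⟨X', hX', Y', hY', hne2, rfl⟩ := mem_interFam.mp hZ'
    rw [Finset.disjoint_left]
    intro x hx hx'
    rw [Finset.mem_inter] at hx hx'
    have hXX : X = X' := subpart_eq_of_mem h₁ hX hX' hx.1 hx'.1
    have hYY : Y = Y' := subpart_eq_of_mem h₂ hY hY' hx.2 hx'.2
    exact hne (by rw [hXX, hYY])

lemma interFam_card {P₁ P₂ : Finset (Finset V)} (h₁ : IsSubpartition P₁)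
    (h₂ : IsSubpartition P₂) : (interFam P₁ P₂).card = npairs P₁ P₂ := by
  rw [interFam, Finset.card_image_of_injOn, npairs]
  · rw [Finset.card_filter, Finset.sum_product]
  · rintro ⟨X, Y⟩ hXY ⟨X', Y'⟩ hXY' heq
    simp only [Finset.mem_coe, Finset.mem_filter, Finset.mem_product] at hXY hXY'
    obtain ⟨z, hz⟩ := hXY.2
    have heq' : X ∩ Y = X' ∩ Y' := heq
    have hz' : z ∈ X' ∩ Y' := heq' ▸ hz
    rw [Finset.mem_inter] at hz hz'
    have e1 : X = X' := subpart_eq_of_mem h₁ hXY.1.1 hXY'.1.1 hz.1 hz'.1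
    have e2 : Y = Y' := subpart_eq_of_mem h₂ hXY.1.2 hXY'.1.2 hz.2 hz'.2
    rw [e1, e2]

lemma interFam_union_sub {P₁ P₂ : Finset (Finset V)} :
    (interFam P₁ P₂).biUnion id ⊆ (P₁.biUnion id) ∩ (P₂.biUnion id) := by
  intro x hx
  obtain ⟨Z, hZ, hxZ⟩ := Finset.mem_biUnion.mp hx
  obtain ⟨X, hX, Y, hY, _, rfl⟩ := mem_interFam.mp hZ
  simp only [id] at hxZ
  rw [Finset.mem_inter] at hxZ ⊢
  exact ⟨Finset.mem_biUnion.mpr ⟨X, hX, hxZ.1⟩, Finset.mem_biUnion.mpr ⟨Y, hY, hxZ.2⟩⟩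

variable {P₁ P₂ Q : Finset (Finset V)}

/-- the outside endpoint of anything entering both `Q` and the intersection family
  avoids the common block `M₀` -/
lemma pw_key (hQ : IsSubpartition Q)
    (hcov : ∀ W : Finset V, (W ∈ P₁ ∨ W ∈ P₂) → ∃ M ∈ Q, W ⊆ M)
    {X Y : Finset V} (hX : X ∈ P₁) (hY : Y ∈ P₂) (hne : (X ∩ Y).Nonempty)
    {Z' : Finset V} (hZ' : Z' ∈ Q) {c d : V}
    (hcd : (c ∈ Z' ∧ d ∉ Z') ∨ (d ∈ Z' ∧ c ∉ Z'))
    (hc : c ∈ X ∩ Y) : (c ∈ X ∧ d ∉ X) ∧ (c ∈ Y ∧ d ∉ Y) := by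
  obtain ⟨MX, hMX, hXMX⟩ := hcov X (Or.inl hX)
  obtain ⟨MY, hMY, hYMY⟩ := hcov Y (Or.inr hY)
  obtain ⟨z, hz⟩ := hne
  rw [Finset.mem_inter] at hz
  have hMM : MX = MY := subpart_eq_of_mem hQ hMX hMY (hXMX hz.1) (hYMY hz.2)
  rw [Finset.mem_inter] at hc
  have hcM : c ∈ MX := hXMX hc.1
  have hdM : d ∉ MX := by
    intro hdM
    rcases hcd with ⟨h1, h2⟩ | ⟨h1, h2⟩
    · exact h2 (subpart_eq_of_mem hQ hMX hZ' hcM h1 ▸ hdM)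
    · exact h2 (subpart_eq_of_mem hQ hMX hZ' hdM h1 ▸ hcM)
  exact ⟨⟨hc.1, fun h => hdM (hXMX h)⟩, ⟨hc.2, fun h => hdM (hMM ▸ hYMY h)⟩⟩

lemma pw_enterQ (hQ : IsSubpartition Q)
    (hcov : ∀ W : Finset V, (W ∈ P₁ ∨ W ∈ P₂) → ∃ M ∈ Q, W ⊆ M)
    (hbi : Q.biUnion id = P₁.biUnion id ∪ P₂.biUnion id)
    {Z : Finset V} (hZ : Z ∈ Q) {c d : V} (hc : c ∈ Z) (hd : d ∉ Z) :
    (∃ W ∈ P₁, c ∈ W ∧ d ∉ W) ∨ (∃ W ∈ P₂, c ∈ W ∧ d ∉ W) := by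
  have hc' : c ∈ Q.biUnion id := Finset.mem_biUnion.mpr ⟨Z, hZ, hc⟩
  rw [hbi, Finset.mem_union] at hc'
  rcases hc' with h | h
  · obtain ⟨W, hW, hcW⟩ := Finset.mem_biUnion.mp h
    obtain ⟨M, hM, hWM⟩ := hcov W (Or.inl hW)
    have : M = Z := subpart_eq_of_mem hQ hM hZ (hWM hcW) hc
    exact Or.inl ⟨W, hW, hcW, fun hdW => hd (this ▸ hWM hdW)⟩
  · obtain ⟨W, hW, hcW⟩ := Finset.mem_biUnion.mp h
    obtain ⟨M, hM, hWM⟩ := hcov W (Or.inr hW)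
    have : M = Z := subpart_eq_of_mem hQ hM hZ (hWM hcW) hc
    exact Or.inr ⟨W, hW, hcW, fun hdW => hd (this ▸ hWM hdW)⟩

lemma pw_arc (hQ : IsSubpartition Q)
    (hcov : ∀ W : Finset V, (W ∈ P₁ ∨ W ∈ P₂) → ∃ M ∈ Q, W ⊆ M)
    (hbi : Q.biUnion id = P₁.biUnion id ∪ P₂.biUnion id) (a : V × V) :
    ind (∃ Z ∈ Q, arcEnters a Z) + ind (∃ Z ∈ interFam P₁ P₂, arcEnters a Z) ≤
      ind (∃ X ∈ P₁, arcEnters a X) + ind (∃ Y ∈ P₂, arcEnters a Y) := by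
  by_cases hq : ∃ Z ∈ Q, arcEnters a Z
  · by_cases hr : ∃ Z ∈ interFam P₁ P₂, arcEnters a Z
    · obtain ⟨Z', hZ'Q, h2Z', h1Z'⟩ := hq
      obtain ⟨Z, hZR, h2Z, h1Z⟩ := hr
      obtain ⟨X, hX, Y, hY, hne, rfl⟩ := mem_interFam.mp hZR
      have key := pw_key hQ hcov hX hY hne hZ'Q (Or.inl ⟨h2Z', h1Z'⟩) h2Z
      have hp1 : ∃ X ∈ P₁, arcEnters a X := ⟨X, hX, key.1.1, key.1.2⟩
      have hp2 : ∃ Y ∈ P₂, arcEnters a Y := ⟨Y, hY, key.2.1, key.2.2⟩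
      rw [ind_pos hp1, ind_pos hp2]; unfold ind; split_ifs <;> omega
    · obtain ⟨Z, hZQ, h2, h1⟩ := hq
      rcases pw_enterQ hQ hcov hbi hZQ h2 h1 with ⟨W, hW, h⟩ | ⟨W, hW, h⟩
      · have hp1 : ∃ X ∈ P₁, arcEnters a X := ⟨W, hW, h⟩
        rw [ind_pos hp1]; unfold ind; split_ifs <;> omega
      · have hp2 : ∃ Y ∈ P₂, arcEnters a Y := ⟨W, hW, h⟩
        rw [ind_pos hp2]; unfold ind; split_ifs <;> omega
  · by_cases hr : ∃ Z ∈ interFam P₁ P₂, arcEnters a Z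
    · obtain ⟨Z, hZR, h2, h1⟩ := hr
      obtain ⟨X, hX, Y, hY, hne, rfl⟩ := mem_interFam.mp hZR
      rw [Finset.mem_inter] at h2
      by_cases h1X : a.1 ∈ X
      · have h1Y : a.1 ∉ Y := fun h => h1 (Finset.mem_inter.mpr ⟨h1X, h⟩)
        have hp2 : ∃ Y ∈ P₂, arcEnters a Y := ⟨Y, hY, h2.2, h1Y⟩
        rw [ind_pos hp2]; unfold ind; split_ifs <;> omega
      · have hp1 : ∃ X ∈ P₁, arcEnters a X := ⟨X, hX, h2.1, h1X⟩
        rw [ind_pos hp1]; unfold ind; split_ifs <;> omega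
    · rw [ind_neg hq, ind_neg hr]; omega

lemma pw_edge (hQ : IsSubpartition Q)
    (hcov : ∀ W : Finset V, (W ∈ P₁ ∨ W ∈ P₂) → ∃ M ∈ Q, W ⊆ M)
    (hbi : Q.biUnion id = P₁.biUnion id ∪ P₂.biUnion id) (e : V × V) :
    ind (∃ Z ∈ Q, edgeEnters e Z) + ind (∃ Z ∈ interFam P₁ P₂, edgeEnters e Z) ≤
      ind (∃ X ∈ P₁, edgeEnters e X) + ind (∃ Y ∈ P₂, edgeEnters e Y) := by
  by_cases hq : ∃ Z ∈ Q, edgeEnters e Z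
  · by_cases hr : ∃ Z ∈ interFam P₁ P₂, edgeEnters e Z
    · obtain ⟨Z', hZ'Q, hcd⟩ := hq
      obtain ⟨Z, hZR, hZent⟩ := hr
      obtain ⟨X, hX, Y, hY, hne, rfl⟩ := mem_interFam.mp hZR
      rcases hZent with ⟨hin, hout⟩ | ⟨hin, hout⟩
      · -- e.1 inside X ∩ Y
        have hcd' : (e.1 ∈ Z' ∧ e.2 ∉ Z') ∨ (e.2 ∈ Z' ∧ e.1 ∉ Z') := hcd
        have key := pw_key hQ hcov hX hY hne hZ'Q hcd' hin
        have hp1 : ∃ X ∈ P₁, edgeEnters e X := ⟨X, hX, Or.inl key.1⟩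
        have hp2 : ∃ Y ∈ P₂, edgeEnters e Y := ⟨Y, hY, Or.inl key.2⟩
        rw [ind_pos hp1, ind_pos hp2]; unfold ind; split_ifs <;> omega
      · have hcd' : (e.2 ∈ Z' ∧ e.1 ∉ Z') ∨ (e.1 ∈ Z' ∧ e.2 ∉ Z') := hcd.symm
        have key := pw_key hQ hcov hX hY hne hZ'Q hcd' hin
        have hp1 : ∃ X ∈ P₁, edgeEnters e X := ⟨X, hX, Or.inr key.1⟩
        have hp2 : ∃ Y ∈ P₂, edgeEnters e Y := ⟨Y, hY, Or.inr key.2⟩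
        rw [ind_pos hp1, ind_pos hp2]; unfold ind; split_ifs <;> omega
    · obtain ⟨Z, hZQ, hent⟩ := hq
      have h' : (∃ W ∈ P₁, edgeEnters e W) ∨ (∃ W ∈ P₂, edgeEnters e W) := by
        rcases hent with ⟨h1, h2⟩ | ⟨h1, h2⟩
        · rcases pw_enterQ hQ hcov hbi hZQ h1 h2 with ⟨W, hW, h⟩ | ⟨W, hW, h⟩
          · exact Or.inl ⟨W, hW, Or.inl h⟩
          · exact Or.inr ⟨W, hW, Or.inl h⟩
        · rcases pw_enterQ hQ hcov hbi hZQ h1 h2 with ⟨W, hW, h⟩ | ⟨W, hW, h⟩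
          · exact Or.inl ⟨W, hW, Or.inr h⟩
          · exact Or.inr ⟨W, hW, Or.inr h⟩
      rcases h' with hp1 | hp2
      · rw [ind_pos hp1]; unfold ind; split_ifs <;> omega
      · rw [ind_pos hp2]; unfold ind; split_ifs <;> omega
  · by_cases hr : ∃ Z ∈ interFam P₁ P₂, edgeEnters e Z
    · obtain ⟨Z, hZR, hent⟩ := hr
      obtain ⟨X, hX, Y, hY, hne, rfl⟩ := mem_interFam.mp hZR
      have h' : (∃ W ∈ P₁, edgeEnters e W) ∨ (∃ W ∈ P₂, edgeEnters e W) := by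
        rcases hent with ⟨h1, h2⟩ | ⟨h1, h2⟩ <;> rw [Finset.mem_inter] at h1
        · by_cases hX2 : e.2 ∈ X
          · have : e.2 ∉ Y := fun h => h2 (Finset.mem_inter.mpr ⟨hX2, h⟩)
            exact Or.inr ⟨Y, hY, Or.inl ⟨h1.2, this⟩⟩
          · exact Or.inl ⟨X, hX, Or.inl ⟨h1.1, hX2⟩⟩
        · by_cases hX2 : e.1 ∈ X
          · have : e.1 ∉ Y := fun h => h2 (Finset.mem_inter.mpr ⟨hX2, h⟩)
            exact Or.inr ⟨Y, hY, Or.inr ⟨h1.2, this⟩⟩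
          · exact Or.inl ⟨X, hX, Or.inr ⟨h1.1, hX2⟩⟩
      rcases h' with hp1 | hp2
      · rw [ind_pos hp1]; unfold ind; split_ifs <;> omega
      · rw [ind_pos hp2]; unfold ind; split_ifs <;> omega
    · rw [ind_neg hq, ind_neg hr]; omega

end PW
/-! ### The orientation lemma -/

section Orient

lemma subpart_singleton {X : Finset V} (hX : X.Nonempty) :
    IsSubpartition ({X} : Finset (Finset V)) := by
  constructor
  · intro Y hY
    rw [Finset.mem_singleton] at hY
    exact hY ▸ hX
  · intro Y hY Z hZ hYZ
    rw [Finset.mem_singleton] at hY hZ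
    exact absurd (hY.trans hZ.symm) hYZ

lemma cnt_congr_pt {α : Type*} (p q : α → Prop) (M : Multiset α)
    (h : ∀ a ∈ M, p a ↔ q a) : cnt p M = cnt q M :=
  le_antisymm (cnt_mono_pt M p q (fun a ha => (h a ha).mp))
    (cnt_mono_pt M q p (fun a ha => (h a ha).mpr))

lemma eMixed_singleton (E A : Multiset (V × V)) (X : Finset V) :
    eMixed E A {X} = cnt (fun e => edgeEnters e X) E + inDeg A X := by
  rw [eMixed_eq_cnt, inDeg_eq_cnt]
  congr 1
  · exact cnt_congr_pt _ _ _ (fun a _ => by simp)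
  · exact cnt_congr_pt _ _ _ (fun a _ => by simp)

lemma pattern_of {P : Finset (Finset V)} (hP : IsSubpartition P) {u v : V}
    (hedge : ∃ X ∈ P, (u ∈ X ∧ v ∉ X) ∨ (v ∈ X ∧ u ∉ X))
    (harc : ¬ ∃ X ∈ P, v ∈ X ∧ u ∉ X) :
    (∃ X ∈ P, u ∈ X) ∧ v ∉ P.biUnion id := by
  obtain ⟨X, hX, h⟩ := hedge
  rcases h with ⟨h1, h2⟩ | ⟨h1, h2⟩
  · refine ⟨⟨X, hX, h1⟩, fun hv => ?_⟩
    obtain ⟨Y, hY, hvY⟩ := Finset.mem_biUnion.mp hv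
    refine harc ⟨Y, hY, hvY, fun huY => ?_⟩
    exact h2 ((subpart_eq_of_mem hP hX hY h1 huY) ▸ hvY)
  · exact absurd ⟨X, hX, h1, h2⟩ harc

lemma pattern_keep {P : Finset (Finset V)} (hP : IsSubpartition P) {e : V × V}
    (hedge : ∃ X ∈ P, edgeEnters e X) (harc : ¬ ∃ X ∈ P, arcEnters e X) :
    (∃ X ∈ P, e.1 ∈ X) ∧ e.2 ∉ P.biUnion id :=
  pattern_of hP (u := e.1) (v := e.2) hedge harc

lemma pattern_swap {P : Finset (Finset V)} (hP : IsSubpartition P) {e : V × V}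
    (hedge : ∃ X ∈ P, edgeEnters e X) (harc : ¬ ∃ X ∈ P, arcEnters e.swap X) :
    (∃ X ∈ P, e.2 ∈ X) ∧ e.1 ∉ P.biUnion id := by
  refine pattern_of hP (u := e.2) (v := e.1) ?_ ?_
  · obtain ⟨X, hX, h⟩ := hedge
    exact ⟨X, hX, h.symm⟩
  · intro ⟨X, hX, h1, h2⟩
    refine harc ⟨X, hX, ?_, ?_⟩
    · rw [Prod.snd_swap]; exact h1
    · rw [Prod.fst_swap]; exact h2

set_option maxHeartbeats 1000000 in
lemma orient_exists {ι : Type*} [Fintype ι] (ρ : ι → V) (E : Multiset (V × V)) :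
    ∀ A : Multiset (V × V),
    (∀ P : Finset (Finset V), IsSubpartition P →
        Fintype.card ι * P.card ≤ eMixed E A P + wcount ρ (P.biUnion id)) →
    ∃ Eo, IsOrientationOf E Eo ∧
      ∀ X : Finset V, X.Nonempty →
        Fintype.card ι ≤ inDeg Eo X + inDeg A X + wcount ρ X := by
  induction E using Multiset.induction with
  | empty =>
    intro A h
    refine ⟨0, ?_, fun X hX => ?_⟩
    · simp [IsOrientationOf]
    · have h1 := h {X} (subpart_singleton hX)
      rw [eMixed_singleton] at h1
      simp only [Finset.singleton_biUnion, id, Finset.card_singleton, Nat.mul_one,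
        cnt_zero] at h1
      have h0 : inDeg (0 : Multiset (V × V)) X = 0 := by
        simp [inDeg]
      omega
  | cons e E ih =>
    intro A h
    by_cases h1 : ∀ P : Finset (Finset V), IsSubpartition P →
        Fintype.card ι * P.card ≤ eMixed E (e ::ₘ A) P + wcount ρ (P.biUnion id)
    · obtain ⟨Eo, hrel, hbound⟩ := ih (e ::ₘ A) h1
      refine ⟨e ::ₘ Eo, Multiset.Rel.cons (Or.inl rfl) hrel, fun X hX => ?_⟩
      have hb := hbound X hX
      rw [inDeg_cons] at hb ⊢
      omega
    · by_cases h2 : ∀ P : Finset (Finset V), IsSubpartition P →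
          Fintype.card ι * P.card ≤ eMixed E (e.swap ::ₘ A) P + wcount ρ (P.biUnion id)
      · obtain ⟨Eo, hrel, hbound⟩ := ih (e.swap ::ₘ A) h2
        refine ⟨e.swap ::ₘ Eo, Multiset.Rel.cons (Or.inr rfl) hrel, fun X hX => ?_⟩
        have hb := hbound X hX
        rw [inDeg_cons] at hb ⊢
        omega
      · exfalso
        push_neg at h1 h2
        obtain ⟨P₁, hP₁sub, hlt₁⟩ := h1
        obtain ⟨P₂, hP₂sub, hlt₂⟩ := h2
        have hHyp₁ := h P₁ hP₁sub
        have hHyp₂ := h P₂ hP₂sub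
        rw [eMixed_cons_arc] at hlt₁ hlt₂
        rw [eMixed_cons_edge] at hHyp₁ hHyp₂
        -- extract pattern for P₁
        have hedge₁ : ∃ X ∈ P₁, edgeEnters e X := by
          by_contra hh
          rw [ind_neg hh] at hHyp₁
          omega
        have harc₁ : ¬ ∃ X ∈ P₁, arcEnters e X := by
          intro hh
          rw [ind_pos hh] at hlt₁
          rw [ind_pos hedge₁] at hHyp₁
          omega
        rw [ind_pos hedge₁] at hHyp₁
        rw [ind_neg harc₁] at hlt₁
        have tight₁ : Fintype.card ι * P₁.card
            = eMixed E A P₁ + 1 + wcount ρ (P₁.biUnion id) := by omega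
        have pat₁ := pattern_keep hP₁sub hedge₁ harc₁
        -- extract pattern for P₂
        have hedge₂ : ∃ X ∈ P₂, edgeEnters e X := by
          by_contra hh
          rw [ind_neg hh] at hHyp₂
          omega
        have harc₂ : ¬ ∃ X ∈ P₂, arcEnters e.swap X := by
          intro hh
          rw [ind_pos hh] at hlt₂
          rw [ind_pos hedge₂] at hHyp₂
          omega
        rw [ind_pos hedge₂] at hHyp₂
        rw [ind_neg harc₂] at hlt₂
        have tight₂ : Fintype.card ι * P₂.card
            = eMixed E A P₂ + 1 + wcount ρ (P₂.biUnion id) := by omega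
        have pat₂ := pattern_swap hP₂sub hedge₂ harc₂
        -- merge and derive the contradiction
        obtain ⟨Q, hQsub, hQbi, hQcov, hQcard⟩ := merge_exists P₁ hP₁sub P₂ hP₂sub
        have hRsub := interFam_subpart hP₁sub hP₂sub
        have hRcard := interFam_card hP₁sub hP₂sub
        have HypQ := h Q hQsub
        have HypR := h (interFam P₁ P₂) hRsub
        rw [eMixed_cons_edge] at HypQ HypR
        -- the edge e does not enter the intersection family
        have hRent : ¬ ∃ Z ∈ interFam P₁ P₂, edgeEnters e Z := by
          rintro ⟨Z, hZ, hent⟩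
          have hsub : Z ⊆ (P₁.biUnion id) ∩ (P₂.biUnion id) := fun x hx =>
            interFam_union_sub (Finset.mem_biUnion.mpr ⟨Z, hZ, hx⟩)
          rcases hent with ⟨hin, _⟩ | ⟨hin, _⟩
          · exact pat₂.2 (Finset.mem_inter.mp (hsub hin)).2
          · exact pat₁.2 (Finset.mem_inter.mp (hsub hin)).1
        rw [ind_neg hRent] at HypR
        -- pointwise bounds
        have cE : cnt (fun g => ∃ Z ∈ Q, edgeEnters g Z) E +
            cnt (fun g => ∃ Z ∈ interFam P₁ P₂, edgeEnters g Z) E ≤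
            cnt (fun g => ∃ X ∈ P₁, edgeEnters g X) E +
            cnt (fun g => ∃ Y ∈ P₂, edgeEnters g Y) E :=
          cnt_pair_le _ _ _ _ _ (fun g _ => pw_edge hQsub hQcov hQbi g)
        have cA : cnt (fun g => ∃ Z ∈ Q, arcEnters g Z) A +
            cnt (fun g => ∃ Z ∈ interFam P₁ P₂, arcEnters g Z) A ≤
            cnt (fun g => ∃ X ∈ P₁, arcEnters g X) A +
            cnt (fun g => ∃ Y ∈ P₂, arcEnters g Y) A :=
          cnt_pair_le _ _ _ _ _ (fun g _ => pw_arc hQsub hQcov hQbi g)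
        have ceM : eMixed E A Q + eMixed E A (interFam P₁ P₂) ≤
            eMixed E A P₁ + eMixed E A P₂ := by
          rw [eMixed_eq_cnt, eMixed_eq_cnt, eMixed_eq_cnt, eMixed_eq_cnt]
          omega
        -- weight bound
        have hwmod := wcount_modular ρ (P₁.biUnion id) (P₂.biUnion id)
        have hwmono : wcount ρ ((interFam P₁ P₂).biUnion id) ≤
            wcount ρ ((P₁.biUnion id) ∩ (P₂.biUnion id)) :=
          wcount_mono ρ interFam_union_sub
        have hwQ : wcount ρ (Q.biUnion id) =
            wcount ρ ((P₁.biUnion id) ∪ (P₂.biUnion id)) := by rw [hQbi]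
        -- cardinality bound
        have hcards : P₁.card + P₂.card ≤ Q.card + (interFam P₁ P₂).card := by
          rw [hRcard]; exact hQcard
        have hmul := Nat.mul_le_mul_left (Fintype.card ι) hcards
        rw [Nat.mul_add, Nat.mul_add] at hmul
        -- the if-term in HypQ is at most 1
        have hite : ind (∃ X ∈ Q, edgeEnters e X) ≤ 1 := ind_le_one _
        omega

end Orient
/-! ### Edmonds' branching theorem -/

section Edmonds

/-- The key step of Lovász's proof: a good arc leaving `U` exists. -/
lemma edmonds_good_arc {m : ℕ} (ρ : Fin m → V) (U : Finset V)
    (DT : Multiset (V × V)) (hU : U ≠ Finset.univ)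
    (hinv : ∀ X : Finset V, X.Nonempty →
      m + 1 ≤ inDeg DT X + wcount ρ X + ind ((X ∩ U).Nonempty)) :
    ∃ a ∈ DT, a.1 ∈ U ∧ a.2 ∉ U ∧
      ∀ X : Finset V, (X ∩ U).Nonempty → arcEnters a X →
        m + 2 ≤ inDeg DT X + wcount ρ X + 1 := by
  classical
  set 𝒟 : Finset (Finset V) :=
    Finset.univ.filter (fun X : Finset V => (X ∩ U).Nonempty ∧ (X \ U).Nonempty ∧
      inDeg DT X + wcount ρ X + 1 = m + 1) with h𝒟
  have hmem𝒟 : ∀ X : Finset V, X ∈ 𝒟 ↔ ((X ∩ U).Nonempty ∧ (X \ U).Nonempty ∧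
      inDeg DT X + wcount ρ X + 1 = m + 1) := by
    intro X
    rw [h𝒟, Finset.mem_filter]
    simp
  -- a set not in 𝒟 but meeting U and its complement satisfies the strict inequality
  have hstrict : ∀ X : Finset V, X ∉ 𝒟 → (X ∩ U).Nonempty → (X \ U).Nonempty →
      m + 2 ≤ inDeg DT X + wcount ρ X + 1 := by
    intro X hX h1 h2
    have h3 := hinv X (h1.mono Finset.inter_subset_left)
    rw [ind_pos h1] at h3
    rcases Nat.lt_or_ge (inDeg DT X + wcount ρ X + 1) (m + 2) with h4 | h4
    · exact absurd ((hmem𝒟 X).mpr ⟨h1, h2, by omega⟩) hX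
    · exact h4
  by_cases hD : 𝒟 = ∅
  · -- no tight set: any arc entering univ \ U works
    have hne : (Finset.univ \ U).Nonempty := by
      rw [Finset.sdiff_nonempty]
      intro hsub
      exact hU (le_antisymm (Finset.subset_univ U) hsub)
    have h1 := hinv _ hne
    have h2 : ((Finset.univ \ U) ∩ U) = ∅ := Finset.sdiff_inter_self _ _
    rw [h2] at h1
    rw [ind_neg (by simp)] at h1
    have h3 : wcount ρ (Finset.univ \ U) ≤ m := wcount_le_card ρ _ |>.trans (by simp)
    have h4 : 1 ≤ inDeg DT (Finset.univ \ U) := by omega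
    rw [inDeg_eq_cnt] at h4
    obtain ⟨a, haDT, ha2, ha1⟩ := cnt_pos_of h4
    rw [Finset.mem_sdiff] at ha2
    have ha1' : a.1 ∈ U := by
      by_contra hh
      exact ha1 (Finset.mem_sdiff.mpr ⟨Finset.mem_univ _, hh⟩)
    refine ⟨a, haDT, ha1', ha2.2, fun X hXU hent => ?_⟩
    refine hstrict X (fun hmem => ?_) hXU ⟨a.2, Finset.mem_sdiff.mpr ⟨hent.1, ha2.2⟩⟩
    · rw [hmem𝒟] at hmem
      rw [h𝒟, Finset.eq_empty_iff_forall_notMem] at hD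
      exact hD X (by rw [← h𝒟, hmem𝒟]; exact hmem)
  · -- take a minimum-cardinality tight set
    obtain ⟨Xs, hXs𝒟, hXsmin⟩ := Finset.exists_min_image 𝒟 Finset.card
      (Finset.nonempty_iff_ne_empty.mpr hD)
    obtain ⟨hXsU, hXsNU, hXstight⟩ := (hmem𝒟 Xs).mp hXs𝒟
    -- count arcs from Xs ∩ U to Xs \ U
    have hc1 : inDeg DT (Xs \ U) ≤ inDeg DT Xs +
        cnt (fun a => a.2 ∈ Xs \ U ∧ a.1 ∈ Xs ∩ U) DT := by
      rw [inDeg_eq_cnt, inDeg_eq_cnt]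
      refine cnt_le_add_pt _ _ _ _ (fun a _ h => ?_)
      obtain ⟨h2, h1⟩ := h
      by_cases hx : a.1 ∈ Xs
      · right
        refine ⟨h2, Finset.mem_inter.mpr ⟨hx, ?_⟩⟩
        by_contra hu
        exact h1 (Finset.mem_sdiff.mpr ⟨hx, hu⟩)
      · exact Or.inl ⟨Finset.mem_sdiff.mp h2 |>.1, hx⟩
    have hinv1 := hinv (Xs \ U) hXsNU
    have h2 : ((Xs \ U) ∩ U) = ∅ := Finset.sdiff_inter_self _ _
    rw [h2, ind_neg (by simp)] at hinv1
    have hwm : wcount ρ (Xs \ U) ≤ wcount ρ Xs := wcount_mono ρ (Finset.sdiff_subset)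
    have hc2 : 1 ≤ cnt (fun a => a.2 ∈ Xs \ U ∧ a.1 ∈ Xs ∩ U) DT := by omega
    obtain ⟨a, haDT, ha2, ha1⟩ := cnt_pos_of hc2
    rw [Finset.mem_sdiff] at ha2
    rw [Finset.mem_inter] at ha1
    refine ⟨a, haDT, ha1.2, ha2.2, fun X hXU hent => ?_⟩
    refine hstrict X (fun hmem => ?_) hXU ⟨a.2, Finset.mem_sdiff.mpr ⟨hent.1, ha2.2⟩⟩
    -- suppose X were tight; uncross with Xs
    obtain ⟨hXU', hXNU', hXtight⟩ := (hmem𝒟 X).mp hmem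
    have hint : (X ∩ Xs).Nonempty := ⟨a.2, Finset.mem_inter.mpr ⟨hent.1, ha2.1⟩⟩
    have hcup := hinv (X ∪ Xs) (hXU'.mono (Finset.inter_subset_left.trans Finset.subset_union_left))
    have hcap := hinv (X ∩ Xs) hint
    have hsubmod := inDeg_submod DT X Xs
    have hwmod := wcount_modular ρ X Xs
    have hindcup : ind (((X ∪ Xs) ∩ U)).Nonempty = 1 :=
      ind_pos (hXU.mono (Finset.inter_subset_inter Finset.subset_union_left subset_rfl))
    have hindcap : ind (((X ∩ Xs) ∩ U)).Nonempty ≤ 1 := ind_le_one _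
    rw [hindcup] at hcup
    -- derive tightness and U-meeting of the intersection
    have hcaptight : inDeg DT (X ∩ Xs) + wcount ρ (X ∩ Xs) + 1 = m + 1 := by omega
    have hcapind : ind (((X ∩ Xs) ∩ U)).Nonempty = 1 := by omega
    have hcapU : ((X ∩ Xs) ∩ U).Nonempty := of_ind_eq_one hcapind
    have hcapNU : ((X ∩ Xs) \ U).Nonempty :=
      ⟨a.2, Finset.mem_sdiff.mpr ⟨Finset.mem_inter.mpr ⟨hent.1, ha2.1⟩, ha2.2⟩⟩
    have hcap𝒟 : (X ∩ Xs) ∈ 𝒟 := (hmem𝒟 _).mpr ⟨hcapU, hcapNU, hcaptight⟩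
    have hcard1 : Xs.card ≤ (X ∩ Xs).card := hXsmin _ hcap𝒟
    have hXs_eq : X ∩ Xs = Xs :=
      Finset.eq_of_subset_of_card_le Finset.inter_subset_right hcard1
    have hsub : Xs ⊆ X := by
      intro x hx
      rw [← hXs_eq] at hx
      exact (Finset.mem_inter.mp hx).1
    exact hent.2 (hsub ha1.1)

end Edmonds
section EdmondsInner

lemma edmonds_inner {m : ℕ} (ρ : Fin m → V) :
    ∀ (n : ℕ) (U : Finset V) (T D : Multiset (V × V)) (r : V),
    (Finset.univ \ U).card = n → T ≤ D → IsArborOn T U r →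
    (∀ X : Finset V, X.Nonempty →
      m + 1 ≤ inDeg (D - T) X + wcount ρ X + ind ((X ∩ U).Nonempty)) →
    ∃ B, T ≤ B ∧ B ≤ D ∧ IsSpanningArbor B r ∧
      (∀ X : Finset V, X.Nonempty → m ≤ inDeg (D - B) X + wcount ρ X) := by
  intro n
  induction n with
  | zero =>
    intro U T D r hcard hTD harb hinv
    have hUuniv : U = Finset.univ := by
      have := Finset.card_eq_zero.mp hcard
      rw [Finset.sdiff_eq_empty_iff_subset] at this
      exact le_antisymm (Finset.subset_univ U) this
    refine ⟨T, le_rfl, hTD, ?_, fun X hX => ?_⟩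
    · rw [IsSpanningArbor, ← hUuniv]
      exact harb
    · have h := hinv X hX
      rw [hUuniv, Finset.inter_univ, ind_pos hX] at h
      omega
  | succ n ih =>
    intro U T D r hcard hTD harb hinv
    have hU : U ≠ Finset.univ := by
      intro h
      rw [h] at hcard
      simp at hcard
    obtain ⟨a, haDT, ha1, ha2, hsafe⟩ := edmonds_good_arc ρ U (D - T) hU hinv
    set U' : Finset V := insert a.2 U with hU'
    set T' : Multiset (V × V) := a ::ₘ T with hT'
    have hT'D : T' ≤ D := cons_le_of_mem_sub hTD haDT
    -- cardinality decreases
    have hcard' : (Finset.univ \ U').card = n := by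
      have e1 := Finset.card_sdiff_of_subset (Finset.subset_univ U)
      have e2 := Finset.card_sdiff_of_subset (Finset.subset_univ U')
      have e3 : U'.card = U.card + 1 := Finset.card_insert_of_notMem ha2
      have e4 : U'.card ≤ Fintype.card V := Finset.card_le_card (Finset.subset_univ U')
      rw [Finset.card_univ] at e1 e2
      omega
    -- the new invariant
    have hinv' : ∀ X : Finset V, X.Nonempty →
        m + 1 ≤ inDeg (D - T') X + wcount ρ X + ind ((X ∩ U').Nonempty) := by
      intro X hX
      have hdeg : inDeg (D - T') X + inDeg T X + ind (arcEnters a X) = inDeg D X := by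
        have h1 := inDeg_sub hT'D X
        have h2 := inDeg_cons a T X
        have h3 := inDeg_le_of_le hT'D X
        rw [h2] at h1 h3
        omega
      have hdeg0 : inDeg (D - T) X + inDeg T X = inDeg D X := by
        have h1 := inDeg_sub hTD X
        have h3 := inDeg_le_of_le hTD X
        omega
      have hmono : ind ((X ∩ U).Nonempty) ≤ ind ((X ∩ U').Nonempty) :=
        ind_mono (fun h => h.mono (Finset.inter_subset_inter subset_rfl
          (Finset.subset_insert _ _)))
      by_cases hent : arcEnters a X
      · rw [ind_pos hent] at hdeg
        by_cases hXU : (X ∩ U).Nonempty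
        · have := hsafe X hXU hent
          have hind' : ind ((X ∩ U').Nonempty) = 1 :=
            ind_pos (hXU.mono (Finset.inter_subset_inter subset_rfl
              (Finset.subset_insert _ _)))
          omega
        · have h := hinv X hX
          rw [ind_neg hXU] at h
          have hind' : ind ((X ∩ U').Nonempty) = 1 := by
            refine ind_pos ⟨a.2, Finset.mem_inter.mpr ⟨hent.1, ?_⟩⟩
            exact Finset.mem_insert_self _ _
          omega
      · rw [ind_neg hent] at hdeg
        have h := hinv X hX
        omega
    -- the new tree is an arborescence on U'
    have harb' : IsArborOn T' U' r := by
      obtain ⟨hrU, harcs, hdeg1, hdeg0, hreach⟩ := harb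
      refine ⟨Finset.mem_insert_of_mem hrU, ?_, ?_, ?_, ?_⟩
      · intro b hb
        rw [hT', Multiset.mem_cons] at hb
        rcases hb with rfl | hb
        · exact ⟨Finset.mem_insert_of_mem ha1, Finset.mem_insert_self _ _⟩
        · obtain ⟨h1, h2⟩ := harcs b hb
          exact ⟨Finset.mem_insert_of_mem h1, Finset.mem_insert_of_mem h2⟩
      · intro v hv hvr
        rw [hT', inDegV_cons]
        rw [hU', Finset.mem_insert] at hv
        rcases hv with rfl | hv
        · have hz : inDegV T a.2 = 0 := by
            rw [inDegV_eq_cnt]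
            refine cnt_eq_zero_of (fun b hb hbv => ?_)
            exact ha2 (hbv ▸ (harcs b hb).2)
          rw [hz, ind_pos rfl]
        · have hva : a.2 ≠ v := fun h => ha2 (h ▸ hv)
          rw [hdeg1 v hv hvr, ind_neg hva]
      · rw [hT', inDegV_cons, hdeg0, ind_neg (fun h : a.2 = r => ha2 (h ▸ hrU))]
      · intro v hv
        rw [hU', Finset.mem_insert] at hv
        have hTle : T ≤ T' := by
          rw [hT']
          exact Multiset.le_cons_self _ _
        rcases hv with rfl | hv
        · refine Relation.ReflTransGen.tail (Reaches_mono hTle (hreach a.1 ha1)) ?_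
          rw [hT']
          have : (a.1, a.2) = a := rfl
          rw [this]
          exact Multiset.mem_cons_self _ _
        · exact Reaches_mono hTle (hreach v hv)
    obtain ⟨B, hTB, hBD, hsp, hres⟩ := ih U' T' D r hcard' hT'D harb' hinv'
    exact ⟨B, le_trans (Multiset.le_cons_self _ _) hTB, hBD, hsp, hres⟩

end EdmondsInner
section EdmondsOuter

lemma wcount_fin_succ {m : ℕ} (ρ : Fin (m + 1) → V) (X : Finset V) :
    wcount ρ X = ind (ρ 0 ∈ X) + wcount (ρ ∘ Fin.succ) X := by
  rw [wcount_eq_sum, wcount_eq_sum, Fin.sum_univ_succ]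
  simp only [Function.comp_apply]
  by_cases h : ρ 0 ∈ X
  · rw [if_pos h, ind_pos h]
  · rw [if_neg h, ind_neg h]

lemma edmonds_fin (m : ℕ) (ρ : Fin m → V) :
    ∀ D : Multiset (V × V),
    (∀ X : Finset V, X.Nonempty → m ≤ inDeg D X + wcount ρ X) →
    ∃ B : Fin m → Multiset (V × V), (∑ i, B i) ≤ D ∧
      ∀ i, IsSpanningArbor (B i) (ρ i) := by
  induction m with
  | zero =>
    intro D _
    exact ⟨fun _ => 0, by simp, fun i => i.elim0⟩
  | succ m ih =>
    intro D h
    have harb0 : IsArborOn (0 : Multiset (V × V)) {ρ 0} (ρ 0) := by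
      refine ⟨Finset.mem_singleton_self _, ?_, ?_, inDegV_zero _, ?_⟩
      · intro b hb
        simp at hb
      · intro v hv hvr
        rw [Finset.mem_singleton] at hv
        exact absurd hv hvr
      · intro v hv
        rw [Finset.mem_singleton] at hv
        exact hv ▸ Relation.ReflTransGen.refl
    have hinv0 : ∀ X : Finset V, X.Nonempty →
        m + 1 ≤ inDeg (D - 0) X + wcount (ρ ∘ Fin.succ) X +
          ind ((X ∩ {ρ 0}).Nonempty) := by
      intro X hX
      have h1 := h X hX
      rw [wcount_fin_succ] at h1
      have h2 : ind (ρ 0 ∈ X) = ind ((X ∩ {ρ 0}).Nonempty) := by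
        refine ind_congr ⟨fun hm => ⟨ρ 0, Finset.mem_inter.mpr ⟨hm, Finset.mem_singleton_self _⟩⟩,
          fun ⟨x, hx⟩ => ?_⟩
        rw [Finset.mem_inter, Finset.mem_singleton] at hx
        exact hx.2 ▸ hx.1
      rw [h2] at h1
      rw [Multiset.sub_zero]
      omega
    obtain ⟨B₀, _, hB₀D, hsp₀, hres⟩ := edmonds_inner (ρ ∘ Fin.succ)
      (Finset.univ \ {ρ 0}).card {ρ 0} 0 D (ρ 0) rfl (Multiset.zero_le D) harb0 hinv0
    obtain ⟨B', hB'sum, hB'arb⟩ := ih (ρ ∘ Fin.succ) (D - B₀) hres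
    refine ⟨Fin.cases B₀ B', ?_, ?_⟩
    · rw [Fin.sum_univ_succ]
      simp only [Fin.cases_zero, Fin.cases_succ]
      calc B₀ + ∑ i : Fin m, B' i ≤ B₀ + (D - B₀) := by
            exact add_le_add_right hB'sum B₀
        _ = D := by
            rw [add_comm]
            exact tsub_add_cancel_of_le hB₀D
    · intro i
      induction i using Fin.cases with
      | zero => simpa using hsp₀
      | succ j => simpa using hB'arb j

lemma edmonds_S {S : Type*} [Fintype S] [DecidableEq S] (π : S → V)
    (D : Multiset (V × V))
    (h : ∀ X : Finset V, X.Nonempty → Fintype.card S ≤ inDeg D X + wcount π X) :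
    ∃ B : S → Multiset (V × V), (∑ s, B s) ≤ D ∧
      ∀ s, IsSpanningArbor (B s) (π s) := by
  classical
  set e := Fintype.equivFin S with he
  have hwc : ∀ X : Finset V, wcount (π ∘ e.symm) X = wcount π X := by
    intro X
    rw [wcount_eq_sum, wcount_eq_sum]
    exact Equiv.sum_comp e.symm (fun s => if π s ∈ X then 1 else 0)
  obtain ⟨B', hsum, harb⟩ := edmonds_fin (Fintype.card S) (π ∘ e.symm) D
    (fun X hX => by rw [hwc]; exact h X hX)
  refine ⟨fun s => B' (e s), ?_, fun s => ?_⟩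
  · calc ∑ s, B' (e s) = ∑ i, B' i := Equiv.sum_comp e B'
      _ ≤ D := hsum
  · have := harb (e s)
    simpa using this

end EdmondsOuter
/-! ### Splitting lemmas and necessity -/

section Split

lemma split_two {α : Type*} [DecidableEq α] {B C D : Multiset α} (h : B ≤ C + D) :
    ∃ Bc Bd, B = Bc + Bd ∧ Bc ≤ C ∧ Bd ≤ D := by
  refine ⟨B ∩ C, B - B ∩ C, ?_, Multiset.inter_le_right, ?_⟩
  · rw [add_comm]
    exact (tsub_add_cancel_of_le Multiset.inter_le_left).symm
  · rw [Multiset.le_iff_count]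
    intro x
    have h1 := Multiset.le_iff_count.mp h x
    rw [Multiset.count_sub, Multiset.count_inter]
    rw [Multiset.count_add] at h1
    omega

lemma split_family {σ : Type*} [DecidableEq σ] (B : σ → Multiset (V × V)) :
    ∀ (F : Finset σ) (C D : Multiset (V × V)), (∑ s ∈ F, B s) ≤ C + D →
    ∃ Cs Ds : σ → Multiset (V × V), (∀ s ∈ F, B s = Cs s + Ds s) ∧
      (∑ s ∈ F, Cs s) ≤ C ∧ (∑ s ∈ F, Ds s) ≤ D := by
  intro F
  induction F using Finset.induction_on with
  | empty =>
    intro C D _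
    exact ⟨fun _ => 0, fun _ => 0, fun s hs => absurd hs (Finset.notMem_empty s),
      by simp, by simp⟩
  | @insert s₀ F hs₀ ih =>
    intro C D h
    rw [Finset.sum_insert hs₀] at h
    have hB0 : B s₀ ≤ C + D := le_trans (Multiset.le_add_right _ _) h
    obtain ⟨Bc, Bd, hBcd, hBc, hBd⟩ := split_two hB0
    have hrest : (∑ s ∈ F, B s) ≤ (C - Bc) + (D - Bd) := by
      rw [tsub_add_tsub_comm hBc hBd]
      refine le_tsub_of_add_le_left ?_
      rw [← hBcd]
      exact h
    obtain ⟨Cs, Ds, hCsDs, hCs, hDs⟩ := ih (C - Bc) (D - Bd) hrest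
    refine ⟨Function.update Cs s₀ Bc, Function.update Ds s₀ Bd, ?_, ?_, ?_⟩
    · intro s hs
      rcases Finset.mem_insert.mp hs with rfl | hs
      · rw [Function.update_self, Function.update_self]
        exact hBcd
      · rw [Function.update_of_ne (fun hss => hs₀ (by rw [← hss]; exact hs)),
          Function.update_of_ne (fun hss => hs₀ (by rw [← hss]; exact hs))]
        exact hCsDs s hs
    · rw [Finset.sum_insert hs₀, Function.update_self]
      have : (∑ s ∈ F, Function.update Cs s₀ Bc s) = ∑ s ∈ F, Cs s :=
        Finset.sum_congr rfl (fun s hs => Function.update_of_ne (fun hss => hs₀ (by rw [← hss]; exact hs)) _ _)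
      rw [this]
      calc Bc + ∑ s ∈ F, Cs s ≤ Bc + (C - Bc) := add_le_add_right hCs Bc
        _ = C := by rw [add_comm]; exact tsub_add_cancel_of_le hBc
    · rw [Finset.sum_insert hs₀, Function.update_self]
      have : (∑ s ∈ F, Function.update Ds s₀ Bd s) = ∑ s ∈ F, Ds s :=
        Finset.sum_congr rfl (fun s hs => Function.update_of_ne (fun hss => hs₀ (by rw [← hss]; exact hs)) _ _)
      rw [this]
      calc Bd + ∑ s ∈ F, Ds s ≤ Bd + (D - Bd) := add_le_add_right hDs Bd
        _ = D := by rw [add_comm]; exact tsub_add_cancel_of_le hBd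

lemma rel_split {σ : Type*} [DecidableEq σ] {r : V × V → V × V → Prop}
    (Cs : σ → Multiset (V × V)) :
    ∀ (F : Finset σ) (E Eo : Multiset (V × V)), Multiset.Rel r E Eo →
    (∑ s ∈ F, Cs s) ≤ Eo →
    ∃ Ed : σ → Multiset (V × V), (∀ s ∈ F, Multiset.Rel r (Ed s) (Cs s)) ∧
      (∑ s ∈ F, Ed s) ≤ E := by
  intro F
  induction F using Finset.induction_on with
  | empty =>
    intro E Eo _ _
    exact ⟨fun _ => 0, fun s hs => absurd hs (Finset.notMem_empty s), by simp⟩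
  | @insert s₀ F hs₀ ih =>
    intro E Eo hrel h
    rw [Finset.sum_insert hs₀] at h
    have hEo : Eo = Cs s₀ + (Eo - Cs s₀) := by
      rw [add_comm]
      exact (tsub_add_cancel_of_le (le_trans (Multiset.le_add_right _ _) h)).symm
    rw [hEo] at hrel
    obtain ⟨E₀, E₁, hrel₀, hrel₁, hE⟩ := Multiset.rel_add_right.mp hrel
    have hrest : (∑ s ∈ F, Cs s) ≤ Eo - Cs s₀ :=
      le_tsub_of_add_le_left h
    obtain ⟨Ed, hEd, hEdsum⟩ := ih E₁ (Eo - Cs s₀) hrel₁ hrest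
    refine ⟨Function.update Ed s₀ E₀, ?_, ?_⟩
    · intro s hs
      rcases Finset.mem_insert.mp hs with rfl | hs
      · rw [Function.update_self]
        exact hrel₀
      · rw [Function.update_of_ne (fun hss => hs₀ (by rw [← hss]; exact hs))]
        exact hEd s hs
    · rw [Finset.sum_insert hs₀, Function.update_self]
      have : (∑ s ∈ F, Function.update Ed s₀ E₀ s) = ∑ s ∈ F, Ed s :=
        Finset.sum_congr rfl (fun s hs => Function.update_of_ne (fun hss => hs₀ (by rw [← hss]; exact hs)) _ _)
      rw [this, hE]
      exact add_le_add_right hEdsum E₀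

lemma rel_cnt_le {α β : Type*} {r : α → β → Prop} {a : Multiset α} {b : Multiset β}
    (hrel : Multiset.Rel r a b) (p : α → Prop) (q : β → Prop)
    (h : ∀ x y, r x y → q y → p x) : cnt q b ≤ cnt p a := by
  induction hrel with
  | zero => simp [cnt_zero]
  | @cons x y as bs hxy hab ih =>
    rw [cnt_cons, cnt_cons]
    have : ind (q y) ≤ ind (p x) := ind_mono (h x y hxy)
    omega

lemma cnt_sum {α σ : Type*} (p : α → Prop) (f : σ → Multiset α) (F : Finset σ) :
    cnt p (∑ s ∈ F, f s) = ∑ s ∈ F, cnt p (f s) := by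
  induction F using Finset.induction_on with
  | empty => simp [cnt_zero]
  | @insert s₀ F hs₀ ih => rw [Finset.sum_insert hs₀, Finset.sum_insert hs₀, cnt_add, ih]

lemma wcount_eq_sum_ind {ι : Type*} [Fintype ι] (ρ : ι → V) (X : Finset V) :
    wcount ρ X = ∑ i : ι, ind (ρ i ∈ X) := by
  rw [wcount_eq_sum]
  refine Finset.sum_congr rfl (fun i _ => ?_)
  by_cases h : ρ i ∈ X
  · rw [if_pos h, ind_pos h]
  · rw [if_neg h, ind_neg h]

end Split

section Necessity

lemma card_le_cnt {β : Type*} [DecidableEq β] {𝒳 : Finset β} {M : Multiset (V × V)}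
    {p : V × V → Prop} (g : β → V × V) (hmem : ∀ X ∈ 𝒳, g X ∈ M ∧ p (g X))
    (hinj : Set.InjOn g 𝒳) : 𝒳.card ≤ cnt p M := by
  classical
  have h1 : 𝒳.card ≤ (M.filter p).toFinset.card := by
    refine Finset.card_le_card_of_injOn g (fun X hX => ?_) hinj
    rw [Finset.mem_coe, Multiset.mem_toFinset, Multiset.mem_filter]
    exact ⟨(hmem X hX).1, (hmem X hX).2⟩
  calc 𝒳.card ≤ (M.filter p).toFinset.card := h1
    _ ≤ Multiset.card (M.filter p) := Multiset.toFinset_card_le _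
    _ = cnt p M := cnt_eq_card_filter p M

lemma arbor_count {B : Multiset (V × V)} {ρ : V} (hB : IsSpanningArbor B ρ)
    {P : Finset (Finset V)} (hP : IsSubpartition P) :
    P.card ≤ cnt (fun g => ∃ X ∈ P, arcEnters g X) B + ind (ρ ∈ P.biUnion id) := by
  classical
  have hex : ∀ X : Finset V, X ∈ P → ρ ∉ X → ∃ g, g ∈ B ∧ arcEnters g X := by
    intro X hX hρ
    obtain ⟨v, hv⟩ := hP.1 X hX
    obtain ⟨g, hg, hent⟩ := reaches_enter (hB.2.2.2.2 v (Finset.mem_univ v)) hρ hv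
    exact ⟨g, hg, hent⟩
  have hch : ∀ X : Finset V, ∃ g : V × V, X ∈ P → ρ ∉ X → g ∈ B ∧ arcEnters g X := by
    intro X
    by_cases hX : X ∈ P ∧ ρ ∉ X
    · obtain ⟨g, hg⟩ := hex X hX.1 hX.2
      exact ⟨g, fun _ _ => hg⟩
    · exact ⟨(ρ, ρ), fun h1 h2 => absurd ⟨h1, h2⟩ hX⟩
  choose g hg using hch
  set 𝒳 : Finset (Finset V) := P.filter (fun X => ρ ∉ X) with h𝒳
  have hcard : 𝒳.card ≤ cnt (fun g => ∃ X ∈ P, arcEnters g X) B := by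
    refine card_le_cnt g (fun X hX => ?_) ?_
    · rw [h𝒳, Finset.mem_filter] at hX
      obtain ⟨h1, h2⟩ := hg X hX.1 hX.2
      exact ⟨h1, X, hX.1, h2⟩
    · intro X hX Y hY hXY
      simp only [Finset.mem_coe, h𝒳, Finset.mem_filter] at hX hY
      obtain ⟨_, hentX⟩ := hg X hX.1 hX.2
      obtain ⟨_, hentY⟩ := hg Y hY.1 hY.2
      rw [hXY] at hentX
      exact subpart_eq_of_mem hP hX.1 hY.1 hentX.1 hentY.1
  have hsplit : P.card = 𝒳.card + (P.filter (fun X => ρ ∈ X)).card := by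
    have h₀ := Finset.card_filter_add_card_filter_not (s := P)
      (p := fun X => ρ ∉ X)
    have heq : P.filter (fun X => ¬ ρ ∉ X) = P.filter (fun X => ρ ∈ X) :=
      Finset.filter_congr (fun X _ => by simp)
    rw [heq] at h₀
    rw [h𝒳]
    omega
  have hmem : (P.filter (fun X => ρ ∈ X)).card ≤ ind (ρ ∈ P.biUnion id) := by
    by_cases hρ : ρ ∈ P.biUnion id
    · rw [ind_pos hρ]
      rw [Finset.card_le_one]
      intro X hX Y hY
      rw [Finset.mem_filter] at hX hY
      exact subpart_eq_of_mem hP hX.1 hY.1 hX.2 hY.2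
    · rw [ind_neg hρ]
      rw [Nat.le_zero, Finset.card_eq_zero, Finset.filter_eq_empty_iff]
      intro X hX hρX
      exact hρ (Finset.mem_biUnion.mpr ⟨X, hX, hρX⟩)
  omega

lemma necessity {S : Type*} [Fintype S] [DecidableEq S] (π : S → V)
    (E A : Multiset (V × V)) (Ed Ar : S → Multiset (V × V))
    (hEd : (∑ s, Ed s) ≤ E) (hAr : (∑ s, Ar s) ≤ A)
    (hpack : ∀ s : S, ∃ Eo, IsOrientationOf (Ed s) Eo ∧
      IsSpanningArbor (Eo + Ar s) (π s))
    (P : Finset (Finset V)) (hP : IsSubpartition P) :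
    Fintype.card S * P.card ≤ eMixed E A P + wcount π (P.biUnion id) := by
  classical
  choose Eo hEoRel hEoArb using hpack
  have key : ∀ s : S, P.card ≤
      cnt (fun g => ∃ X ∈ P, edgeEnters g X) (Ed s) +
      cnt (fun g => ∃ X ∈ P, arcEnters g X) (Ar s) + ind (π s ∈ P.biUnion id) := by
    intro s
    have h1 := arbor_count (hEoArb s) hP
    rw [cnt_add] at h1
    have h2 : cnt (fun g => ∃ X ∈ P, arcEnters g X) (Eo s) ≤
        cnt (fun g => ∃ X ∈ P, edgeEnters g X) (Ed s) := by
      refine rel_cnt_le (hEoRel s) _ _ (fun x y hxy hq => ?_)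
      obtain ⟨X, hX, hent⟩ := hq
      rcases hxy with rfl | rfl
      · exact ⟨X, hX, Or.inr ⟨hent.1, hent.2⟩⟩
      · exact ⟨X, hX, Or.inl ⟨hent.1, hent.2⟩⟩
    omega
  have hsum : Fintype.card S * P.card = ∑ _s : S, P.card := by
    rw [Finset.sum_const, Finset.card_univ, smul_eq_mul]
  rw [hsum]
  calc ∑ _s : S, P.card ≤ ∑ s : S,
        (cnt (fun g => ∃ X ∈ P, edgeEnters g X) (Ed s) +
         cnt (fun g => ∃ X ∈ P, arcEnters g X) (Ar s) + ind (π s ∈ P.biUnion id)) :=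
        Finset.sum_le_sum (fun s _ => key s)
    _ = (∑ s : S, cnt (fun g => ∃ X ∈ P, edgeEnters g X) (Ed s)) +
        (∑ s : S, cnt (fun g => ∃ X ∈ P, arcEnters g X) (Ar s)) +
        (∑ s : S, ind (π s ∈ P.biUnion id)) := by
        rw [← Finset.sum_add_distrib, ← Finset.sum_add_distrib]
    _ ≤ eMixed E A P + wcount π (P.biUnion id) := by
        rw [eMixed_eq_cnt, wcount_eq_sum_ind]
        have e1 : (∑ s : S, cnt (fun g => ∃ X ∈ P, edgeEnters g X) (Ed s)) ≤
            cnt (fun g => ∃ X ∈ P, edgeEnters g X) E := by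
          rw [← cnt_sum]
          exact cnt_le_of_le _ hEd
        have e2 : (∑ s : S, cnt (fun g => ∃ X ∈ P, arcEnters g X) (Ar s)) ≤
            cnt (fun g => ∃ X ∈ P, arcEnters g X) A := by
          rw [← cnt_sum]
          exact cnt_le_of_le _ hAr
        omega

end Necessity
/-- **Frank's theorem on mixed graphs.** There is a packing of spanning mixed
`s`-arborescences in the mixed graph `F = (V, E ∪ A)`, one rooted at each element
`s` of the multiset `S`, iff `e_{E∪A}(𝒫) ≥ |S|·|𝒫| − |S_{∪𝒫}|` for every
subpartition `𝒫` of `V`. -/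
theorem frank_packing_spanning_mixed_arborescences
    (V : Type) [Fintype V] [DecidableEq V]
    (E A : Multiset (V × V)) (hE : ∀ e ∈ E, e.1 ≠ e.2) (hA : ∀ a ∈ A, a.1 ≠ a.2)
    (S : Type) [Fintype S] [DecidableEq S] (π : S → V) :
    (∃ Ed Ar : S → Multiset (V × V),
        (∑ s : S, Ed s) ≤ E ∧ (∑ s : S, Ar s) ≤ A ∧
        ∀ s : S, ∃ Eo, IsOrientationOf (Ed s) Eo ∧
          IsSpanningArbor (Eo + Ar s) (π s)) ↔
    ∀ P : Finset (Finset V), IsSubpartition P →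
      (Fintype.card S : ℤ) * P.card -
          (Finset.univ.filter fun s => π s ∈ P.biUnion id).card
        ≤ (eMixed E A P : ℤ) := by
  constructor
  · rintro ⟨Ed, Ar, hEd, hAr, hpack⟩ P hP
    have h1 := necessity π E A Ed Ar hEd hAr hpack P hP
    have h2 : (Finset.univ.filter fun s => π s ∈ P.biUnion id).card
        = wcount π (P.biUnion id) := rfl
    rw [h2]
    omega
  · intro hcond
    have hHyp : ∀ P : Finset (Finset V), IsSubpartition P →
        Fintype.card S * P.card ≤ eMixed E A P + wcount π (P.biUnion id) := by
      intro P hP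
      have h1 := hcond P hP
      have h2 : (Finset.univ.filter fun s => π s ∈ P.biUnion id).card
          = wcount π (P.biUnion id) := rfl
      rw [h2] at h1
      omega
    obtain ⟨Eo, hrel, hbound⟩ := orient_exists π E A hHyp
    have hEdm : ∀ X : Finset V, X.Nonempty →
        Fintype.card S ≤ inDeg (Eo + A) X + wcount π X := by
      intro X hX
      rw [inDeg_add]
      have := hbound X hX
      omega
    obtain ⟨B, hBsum, hBarb⟩ := edmonds_S π (Eo + A) hEdm
    have hBsum' : (∑ s ∈ Finset.univ, B s) ≤ Eo + A := hBsum
    obtain ⟨Cs, Ds, hCsDs, hCs, hDs⟩ := split_family B Finset.univ Eo A hBsum'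
    obtain ⟨Ed, hEdrel, hEdsum⟩ := rel_split Cs Finset.univ E Eo hrel hCs
    refine ⟨Ed, Ds, hEdsum, hDs, fun s => ?_⟩
    refine ⟨Cs s, hEdrel s (Finset.mem_univ s), ?_⟩
    have hB := hBarb s
    rw [hCsDs s (Finset.mem_univ s)] at hB
    exact hB

end ArborPaper
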